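/- arXiv:1003.4334 — 2 statements merged into one kernel-verified Lean document; each statement's English description precedes it below -/
import Mathlib

section
/- For κ > 0 and fixed t ∈ (0,1], the function r ↦ s_κ(t r)/s_κ(r) is nondecreasing on (0, π/√κ). -/
open Real

noncomputable def sk (κ r : ℝ) : ℝ :=
  if 0 < κ then Real.sin (Real.sqrt κ * r) / Real.sqrt κ
  else if κ < 0 then Real.sinh (Real.sqrt |κ| * r) / Real.sqrt |κ|
  else r

lemma hds_aux (a x : ℝ) : HasDerivAt (fun x => Real.sin (a*x)) (a * Real.cos (a*x)) x := by
  simpa [mul_comm, Function.comp_def] using (Real.hasDerivAt_sin (a*x)).comp x ((hasDerivAt_id x).const_mul a)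

lemma hdc_aux (a x : ℝ) : HasDerivAt (fun x => Real.cos (a*x)) (-(a * Real.sin (a*x))) x := by
  simpa [mul_comm, Function.comp_def] using (Real.hasDerivAt_cos (a*x)).comp x ((hasDerivAt_id x).const_mul a)

lemma key_aux (c t : ℝ) (hc : 0 < c) (ht0 : 0 < t) (ht1 : t ≤ 1) :
    ∀ r ∈ Set.Ioo (0:ℝ) (Real.pi / c),
      0 ≤ t * Real.cos (c*t*r) * Real.sin (c*r) - Real.sin (c*t*r) * Real.cos (c*r) := by
  intro r hr
  set g : ℝ → ℝ := fun x =>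
      t * Real.cos (c*t*x) * Real.sin (c*x) - Real.sin (c*t*x) * Real.cos (c*x) with hg
  have hderiv : ∀ x : ℝ,
      HasDerivAt g (c*(1-t^2) * (Real.sin (c*t*x) * Real.sin (c*x))) x := by
    intro x
    have h1 := ((hdc_aux (c*t) x).const_mul t).mul (hds_aux c x)
    have h2 := (hds_aux (c*t) x).mul (hdc_aux c x)
    convert h1.sub h2 using 1
    · rfl
    · rfl
    · rfl
    ring
  have hmono : MonotoneOn g (Set.Icc 0 r) := by
    apply monotoneOn_of_deriv_nonneg (convex_Icc _ _)
    · exact fun x _ => (hderiv x).continuousAt.continuousWithinAt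
    · exact fun x _ => ((hderiv x).differentiableAt).differentiableWithinAt
    · intro x hx
      rw [interior_Icc] at hx
      rw [(hderiv x).deriv]
      have hxpi : c * x ≤ Real.pi := by
        have := hx.2.trans_le hr.2.le
        calc c * x ≤ c * (Real.pi / c) := by nlinarith
          _ = Real.pi := by field_simp
      have hsx : 0 ≤ Real.sin (c*x) :=
        Real.sin_nonneg_of_nonneg_of_le_pi (by nlinarith [hx.1]) hxpi
      have hcx0 : 0 ≤ c * x := by nlinarith [hx.1]
      have hstx : 0 ≤ Real.sin (c*t*x) := by
        apply Real.sin_nonneg_of_nonneg_of_le_pi (by nlinarith [hx.1])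
        nlinarith [mul_nonneg hcx0 (sub_nonneg.mpr ht1)]
      have h1t : 0 ≤ 1 - t^2 := by nlinarith
      positivity
  have h0 : g 0 = 0 := by simp [hg]
  have := hmono (Set.left_mem_Icc.mpr hr.1.le) (Set.right_mem_Icc.mpr hr.1.le) hr.1.le
  rw [h0] at this
  exact this

/-- For `κ > 0` and fixed `t ∈ (0,1]`, `r ↦ s_κ(t r)/s_κ(r)` is nondecreasing on
`(0, π/√κ)`. -/
theorem stmt3 (κ : ℝ) (hκ : 0 < κ) (t : ℝ) (ht : t ∈ Set.Ioc (0:ℝ) 1) :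
    MonotoneOn (fun r => sk κ (t * r) / sk κ r) (Set.Ioo 0 (Real.pi / Real.sqrt κ)) := by
  obtain ⟨ht0, ht1⟩ := ht
  set c := Real.sqrt κ with hc
  have hc0 : 0 < c := Real.sqrt_pos.mpr hκ
  -- positivity of sines on the interval
  have hsinpos : ∀ r ∈ Set.Ioo (0:ℝ) (Real.pi / c), 0 < Real.sin (c*r) := by
    intro r hr
    apply Real.sin_pos_of_pos_of_lt_pi (by nlinarith [hr.1])
    have := hr.2
    calc c * r < c * (Real.pi / c) := by nlinarith
      _ = Real.pi := by field_simp
  -- the simplified function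
  have hmono : MonotoneOn (fun r => Real.sin (c*t*r) / Real.sin (c*r))
      (Set.Ioo 0 (Real.pi / c)) := by
    apply monotoneOn_of_deriv_nonneg (convex_Ioo _ _)
    · intro r hr
      exact (Real.continuous_sin.comp (continuous_const.mul continuous_id)).continuousOn.div
        (Real.continuous_sin.comp (continuous_const.mul continuous_id)).continuousOn
        (fun x hx => (hsinpos x hx).ne') r hr
    · rw [interior_Ioo]
      intro r hr
      exact (((hds_aux (c*t) r).div (hds_aux c r) (hsinpos r hr).ne')).differentiableAt.differentiableWithinAt
    · rw [interior_Ioo]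
      intro r hr
      have hd := (hds_aux (c*t) r).div (hds_aux c r) (hsinpos r hr).ne'
      rw [show deriv (fun r => Real.sin (c*t*r) / Real.sin (c*r)) r = _ from hd.deriv]
      apply div_nonneg _ (sq_nonneg _)
      have hk := key_aux c t hc0 ht0 ht1 r hr
      nlinarith [hk]
  apply hmono.congr
  intro r hr
  have hne := (hsinpos r hr).ne'
  simp only [sk, if_pos hκ, ← hc]
  rw [div_div_div_cancel_right₀ hc0.ne']
  ring_nf
end

section
/- Let λ(ξ) = √(a²·cos²ξ + b²·sin²ξ) with 0 < a ≤ b. If L : ℝⁿ → ℝⁿ is a linear map and e₁,…,eₙ is an orthonormal basis such that ‖L(u)‖ ≤ λ(θ_u) for every unit vector u, where θ_u is the angle between u and e₁, then |det L| ≤ λ(0)·λ(π/2)^{n-1} = a·b^{n-1}. -/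
open Real InnerProductGeometry

/-- Hadamard-inequality step: if `‖L u‖ ≤ λ(angle(u,e₁))` for all unit vectors `u`,
where `λ(ξ) = √(a²cos²ξ + b²sin²ξ)` with `0 < a ≤ b` and `e₁` is the first vector of an
orthonormal basis, then `|det L| ≤ λ(0)·λ(π/2)^{n-1} = a·b^{n-1}`. -/
theorem stmt5 (n : ℕ) (hn : 0 < n) (a b : ℝ) (ha : 0 < a) (hab : a ≤ b)
    (lam : ℝ → ℝ)
    (hlam : ∀ ξ : ℝ, lam ξ = Real.sqrt (a ^ 2 * Real.cos ξ ^ 2 + b ^ 2 * Real.sin ξ ^ 2))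
    (L : EuclideanSpace ℝ (Fin n) →ₗ[ℝ] EuclideanSpace ℝ (Fin n))
    (e : OrthonormalBasis (Fin n) ℝ (EuclideanSpace ℝ (Fin n)))
    (hL : ∀ u : EuclideanSpace ℝ (Fin n), ‖u‖ = 1 →
      ‖L u‖ ≤ lam (InnerProductGeometry.angle u (e ⟨0, hn⟩))) :
    |LinearMap.det L| ≤ lam 0 * lam (Real.pi / 2) ^ (n - 1) ∧
      lam 0 * lam (Real.pi / 2) ^ (n - 1) = a * b ^ (n - 1) := by
  have hlam0 : lam 0 = a := by
    rw [hlam]; simp [Real.sqrt_sq ha.le]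
  have hlam2 : lam (Real.pi / 2) = b := by
    rw [hlam]; simp [Real.sqrt_sq (ha.trans_le hab).le]
  have heq : lam 0 * lam (Real.pi / 2) ^ (n - 1) = a * b ^ (n - 1) := by
    rw [hlam0, hlam2]
  refine ⟨?_, heq⟩
  rw [heq]
  set i0 : Fin n := ⟨0, hn⟩
  -- the images of the basis vectors
  set f : Fin n → EuclideanSpace ℝ (Fin n) := fun i => L (e i) with hf
  have hcard : Module.finrank ℝ (EuclideanSpace ℝ (Fin n)) = Fintype.card (Fin n) := by
    simp
  have hwf : WellFoundedLT (Fin n) := inferInstance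
  set g := InnerProductSpace.gramSchmidtOrthonormalBasis (𝕜 := ℝ) hcard f with hg
  have hdet : g.toBasis.det f = ∏ i, inner ℝ (g i) (f i) :=
    InnerProductSpace.gramSchmidtOrthonormalBasis_det (𝕜 := ℝ) hcard f
  have hcomp : g.toBasis.det f = LinearMap.det L * g.toBasis.det ⇑e := by
    have : f = L ∘ ⇑e := rfl
    rw [this, Module.Basis.det_comp]
  have habs1 : |g.toBasis.det ⇑e| = 1 := by
    rcases g.det_to_matrix_orthonormalBasis_real e with h | h <;> rw [h] <;> norm_num
  -- norm bounds on each column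
  have hnorm : ∀ i : Fin n, ‖f i‖ ≤ if i = i0 then a else b := by
    intro i
    have hei : ‖e i‖ = 1 := e.orthonormal.1 i
    have h1 := hL (e i) hei
    by_cases h : i = i0
    · have hne : e i ≠ 0 := by
        intro h0; rw [h0, norm_zero] at hei; norm_num at hei
      rw [h] at h1 hne
      rw [InnerProductGeometry.angle_self hne, hlam0] at h1
      simpa [h] using h1
    · have hinner : inner ℝ (e i) (e i0) = (0 : ℝ) := e.orthonormal.2 h
      rw [(InnerProductGeometry.inner_eq_zero_iff_angle_eq_pi_div_two (e i) (e i0)).1 hinner,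
        hlam2] at h1
      simpa [h] using h1
  have hb : (0 : ℝ) < b := ha.trans_le hab
  calc |LinearMap.det L| = |LinearMap.det L| * |g.toBasis.det ⇑e| := by rw [habs1, mul_one]
    _ = |g.toBasis.det f| := by rw [hcomp, abs_mul]
    _ = |∏ i, inner ℝ (g i) (f i)| := by rw [hdet]
    _ = ∏ i, |(inner ℝ (g i) (f i) : ℝ)| := by rw [Finset.abs_prod]
    _ ≤ ∏ i, (if i = i0 then a else b) := by
        apply Finset.prod_le_prod (fun i _ => abs_nonneg _)
        intro i _
        calc |(inner ℝ (g i) (f i) : ℝ)| ≤ ‖g i‖ * ‖f i‖ := abs_real_inner_le_norm _ _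
          _ = ‖f i‖ := by rw [g.orthonormal.1 i, one_mul]
          _ ≤ _ := hnorm i
    _ = a * b ^ (n - 1) := by
        rw [← Finset.mul_prod_erase Finset.univ _ (Finset.mem_univ i0), if_pos rfl]
        congr 1
        rw [Finset.prod_congr rfl (fun i hi => if_neg (Finset.ne_of_mem_erase hi)),
          Finset.prod_const, Finset.card_erase_of_mem (Finset.mem_univ i0),
          Finset.card_univ, Fintype.card_fin]
end
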